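/- For every infinite set of real numbers X, the following are equivalent: (1) X satisfies Ufin(B_Γ,B_T); (2) every Borel image of X in ℕ^ℕ satisfies the excluded middle property. -/

import Mathlib

open Set

namespace TauCoverPaper

/-- `a ⊆* b`: `a \ b` is finite. -/
def AlmostSubset (a b : Set ℕ) : Prop := (a \ b).Finite

/-- `Y` is linearly quasiordered by `⊆*`. -/
def LinQuasi (Y : Set (Set ℕ)) : Prop :=
  ∀ a ∈ Y, ∀ b ∈ Y, AlmostSubset a b ∨ AlmostSubset b a

/-- `a` is a pseudo-intersection of the family `Y`. -/
def PseudoIntersection (a : Set ℕ) (Y : Set (Set ℕ)) : Prop :=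
  a.Infinite ∧ ∀ b ∈ Y, AlmostSubset a b

/-- `Y` is centered: every nonempty finite subfamily has infinite intersection. -/
def Centered (Y : Set (Set ℕ)) : Prop :=
  ∀ F : Set (Set ℕ), F ⊆ Y → F.Finite → F.Nonempty → (⋂₀ F).Infinite

/-- A tower: a family of infinite subsets of `ℕ`, linearly quasiordered by `⊆*`,
with no pseudo-intersection. -/
def IsTower (Y : Set (Set ℕ)) : Prop :=
  (∀ a ∈ Y, a.Infinite) ∧ LinQuasi Y ∧ ¬ ∃ a, PseudoIntersection a Y

variable {α : Type}

/-- A cover of the space `α`: the union is everything, and the whole space is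
not a member. -/
def IsCover (𝒰 : Set (Set α)) : Prop := ⋃₀ 𝒰 = univ ∧ univ ∉ 𝒰

/-- A large cover: each point belongs to infinitely many members. -/
def IsLargeCover (𝒰 : Set (Set α)) : Prop :=
  IsCover 𝒰 ∧ ∀ x : α, {U ∈ 𝒰 | x ∈ U}.Infinite

/-- An ω-cover: each finite set is contained in some member. -/
def IsOmegaCover (𝒰 : Set (Set α)) : Prop :=
  IsCover 𝒰 ∧ ∀ F : Set α, F.Finite → ∃ U ∈ 𝒰, F ⊆ U

/-- A γ-cover: infinite, and each point belongs to all but finitely many members. -/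
def IsGammaCover (𝒰 : Set (Set α)) : Prop :=
  IsCover 𝒰 ∧ 𝒰.Infinite ∧ ∀ x : α, {U ∈ 𝒰 | x ∉ U}.Finite

/-- A τ-cover: a large cover such that for all `x, y`, one of the sets
`{U : x ∈ U, y ∉ U}`, `{U : y ∈ U, x ∉ U}` is finite. -/
def IsTauCover (𝒰 : Set (Set α)) : Prop :=
  IsLargeCover 𝒰 ∧ ∀ x y : α,
    {U ∈ 𝒰 | x ∈ U ∧ y ∉ U}.Finite ∨ {U ∈ 𝒰 | y ∈ U ∧ x ∉ U}.Finite

/-- A τ*-cover: a large, countably infinite cover which, enumerated bijectively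
as `⟨Uₙ⟩`, admits for each point `y` an infinite `r y ⊆ {n | y ∈ Uₙ}` such that
the family `{r y}` is linearly quasiordered by `⊆*`. -/
def IsTauStarCover (𝒰 : Set (Set α)) : Prop :=
  IsLargeCover 𝒰 ∧
  ∃ U : ℕ → Set α, Function.Injective U ∧ Set.range U = 𝒰 ∧
    ∃ r : α → Set ℕ,
      (∀ y : α, (r y).Infinite ∧ r y ⊆ {n | y ∈ U n}) ∧
      (∀ y z : α, AlmostSubset (r y) (r z) ∨ AlmostSubset (r z) (r y))

/-- Ω : countable open ω-covers. -/
def OpenOmega (α : Type) [TopologicalSpace α] : Set (Set (Set α)) :=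
  {𝒰 | 𝒰.Countable ∧ (∀ U ∈ 𝒰, IsOpen U) ∧ IsOmegaCover 𝒰}

/-- Γ : countable open γ-covers. -/
def OpenGamma (α : Type) [TopologicalSpace α] : Set (Set (Set α)) :=
  {𝒰 | 𝒰.Countable ∧ (∀ U ∈ 𝒰, IsOpen U) ∧ IsGammaCover 𝒰}

/-- T : countable open τ-covers. -/
def OpenTau (α : Type) [TopologicalSpace α] : Set (Set (Set α)) :=
  {𝒰 | 𝒰.Countable ∧ (∀ U ∈ 𝒰, IsOpen U) ∧ IsTauCover 𝒰}

/-- T* : countable open τ*-covers. -/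
def OpenTauStar (α : Type) [TopologicalSpace α] : Set (Set (Set α)) :=
  {𝒰 | 𝒰.Countable ∧ (∀ U ∈ 𝒰, IsOpen U) ∧ IsTauStarCover 𝒰}

/-- B_Ω : countable Borel ω-covers. -/
def BorelOmega (α : Type) [MeasurableSpace α] : Set (Set (Set α)) :=
  {𝒰 | 𝒰.Countable ∧ (∀ U ∈ 𝒰, MeasurableSet U) ∧ IsOmegaCover 𝒰}

/-- B_Γ : countable Borel γ-covers. -/
def BorelGamma (α : Type) [MeasurableSpace α] : Set (Set (Set α)) :=
  {𝒰 | 𝒰.Countable ∧ (∀ U ∈ 𝒰, MeasurableSet U) ∧ IsGammaCover 𝒰}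

/-- B_T : countable Borel τ-covers. -/
def BorelTau (α : Type) [MeasurableSpace α] : Set (Set (Set α)) :=
  {𝒰 | 𝒰.Countable ∧ (∀ U ∈ 𝒰, MeasurableSet U) ∧ IsTauCover 𝒰}

/-- The selection principle S₁(𝔘,𝔙). -/
def S1 (𝔘 𝔙 : Set (Set (Set α))) : Prop :=
  ∀ 𝒰 : ℕ → Set (Set α), (∀ n, 𝒰 n ∈ 𝔘) →
    ∃ V : ℕ → Set α, (∀ n, V n ∈ 𝒰 n) ∧ Set.range V ∈ 𝔙

/-- The selection principle Sfin(𝔘,𝔙). -/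
def Sfin (𝔘 𝔙 : Set (Set (Set α))) : Prop :=
  ∀ 𝒰 : ℕ → Set (Set α), (∀ n, 𝒰 n ∈ 𝔘) →
    ∃ F : ℕ → Set (Set α), (∀ n, (F n).Finite ∧ F n ⊆ 𝒰 n) ∧ (⋃ n, F n) ∈ 𝔙

/-- The selection principle Ufin(𝔘,𝔙). -/
def Ufin (𝔘 𝔙 : Set (Set (Set α))) : Prop :=
  ∀ 𝒰 : ℕ → Set (Set α), (∀ n, 𝒰 n ∈ 𝔘) →
    (∀ n, ¬ ∃ F : Set (Set α), F ⊆ 𝒰 n ∧ F.Finite ∧ ⋃₀ F = univ) →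
    ∃ F : ℕ → Set (Set α), (∀ n, (F n).Finite ∧ F n ⊆ 𝒰 n) ∧
      Set.range (fun n => ⋃₀ (F n)) ∈ 𝔙

/-- binom(𝔘,𝔙): each member of 𝔘 contains a subfamily belonging to 𝔙. -/
def Binom (𝔘 𝔙 : Set (Set (Set α))) : Prop :=
  ∀ 𝒰 ∈ 𝔘, ∃ 𝒱 ⊆ 𝒰, 𝒱 ∈ 𝔙

/-- Borel measurability of a map into `P(ℕ)` (identified with the Cantor
space via characteristic functions): each coordinate is measurable. -/
def BorelMeasSets {β : Type} [MeasurableSpace β] (f : β → Set ℕ) : Prop :=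
  ∀ n : ℕ, MeasurableSet {x | n ∈ f x}

/-- The excluded middle property for a family `Y ⊆ ℕ^ℕ`. -/
def ExcludedMiddleProp (Y : Set (ℕ → ℕ)) : Prop :=
  ∃ g : ℕ → ℕ,
    (∀ f ∈ Y, {n | f n < g n}.Infinite) ∧
    ∀ f ∈ Y, ∀ h ∈ Y,
      {n | f n < g n ∧ g n ≤ h n}.Finite ∨ {n | h n < g n ∧ g n ≤ f n}.Finite

/-- non(J): the minimal cardinality of a set of reals not satisfying `J`. -/
noncomputable def nonCard (J : Set ℝ → Prop) : Cardinal :=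
  sInf {c : Cardinal | ∃ X : Set ℝ, ¬ J X ∧ Cardinal.mk ↥X = c}

/-- add(J): the minimal cardinality of a family of sets of reals, each
satisfying `J`, whose union does not satisfy `J`. -/
noncomputable def addCard (J : Set ℝ → Prop) : Cardinal :=
  sInf {c : Cardinal | ∃ 𝔉 : Set (Set ℝ),
    (∀ A ∈ 𝔉, J A) ∧ ¬ J (⋃₀ 𝔉) ∧ Cardinal.mk ↥𝔉 = c}

/-- 𝔱 : the minimal cardinality of a tower. -/
noncomputable def towerCard : Cardinal :=
  sInf {c : Cardinal | ∃ Y : Set (Set ℕ), IsTower Y ∧ Cardinal.mk ↥Y = c}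

lemma pigeonhole' {β : Type*} {s : Set ℕ} {t : Set β} {φ : ℕ → β}
    (hs : s.Infinite) (ht : t.Finite) (hφ : ∀ n ∈ s, φ n ∈ t) :
    ∃ b ∈ t, {n | n ∈ s ∧ φ n = b}.Infinite := by
  by_contra hcon
  push_neg at hcon
  have hsub : s ⊆ ⋃ b ∈ t, {n | n ∈ s ∧ φ n = b} := fun n hn =>
    mem_biUnion (hφ n hn) ⟨hn, rfl⟩
  exact hs ((ht.biUnion hcon).subset hsub)

lemma chain_max' {β : Type*} (𝒜 : Set (Set β)) (hfin : 𝒜.Finite) (hne : 𝒜.Nonempty)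
    (hchain : ∀ A ∈ 𝒜, ∀ B ∈ 𝒜, A ⊆ B ∨ B ⊆ A) :
    ∃ M ∈ 𝒜, ∀ A ∈ 𝒜, A ⊆ M := by
  obtain ⟨M, hM, hmax⟩ := Set.Finite.exists_maximalFor id 𝒜 hfin hne
  exact ⟨M, hM, fun A hA => (hchain A hA M hM).elim id (fun h => hmax hA h)⟩

lemma chain_sUnion' {β : Type*} (E : ℕ → Set β) (hE : Monotone E)
    {F : Set (Set β)} (hfin : F.Finite) :
    F ⊆ Set.range E → F.Nonempty → ∃ m, E m ∈ F ∧ ⋃₀ F = E m := by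
  refine Set.Finite.induction_on (motive := fun F _ => F ⊆ Set.range E → F.Nonempty → ∃ m, E m ∈ F ∧ ⋃₀ F = E m) F hfin (fun _ hne => absurd hne (by simp [Set.not_nonempty_empty])) ?_
  intro a s ha hs IH hsub hne
  obtain ⟨m₀, hm₀⟩ := hsub (mem_insert a s)
  rcases s.eq_empty_or_nonempty with rfl | hsne
  · exact ⟨m₀, by simp [hm₀], by simp [hm₀]⟩
  · obtain ⟨m₁, hm₁F, hm₁U⟩ := IH (fun t ht => hsub (mem_insert_of_mem a ht)) hsne
    rcases le_total m₀ m₁ with h | h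
    · refine ⟨m₁, mem_insert_of_mem a hm₁F, ?_⟩
      rw [sUnion_insert, hm₁U, ← hm₀]
      exact union_eq_right.mpr (hE h)
    · refine ⟨m₀, by rw [← hm₀]; exact mem_insert _ s, ?_⟩
      rw [sUnion_insert, hm₁U, ← hm₀]
      exact union_eq_left.mpr (hE h)


lemma ufin_of_emp {α : Type} [MeasurableSpace α] [Nonempty α]
    (hemp : ∀ f : α → (ℕ → ℕ), Measurable f → ExcludedMiddleProp (Set.range f)) :
    Ufin (BorelGamma α) (BorelTau α) := by
  classical
  intro 𝒰 h𝒰 hnofin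
  have hcov : ∀ n, ⋃₀ 𝒰 n = univ := fun n => (h𝒰 n).2.2.1.1
  have hmeas : ∀ n, ∀ S ∈ 𝒰 n, MeasurableSet S := fun n => (h𝒰 n).2.1
  have hne : ∀ n, (𝒰 n).Nonempty := by
    intro n
    obtain ⟨x⟩ := ‹Nonempty α›
    have hx : x ∈ ⋃₀ 𝒰 n := (hcov n).symm ▸ mem_univ x
    obtain ⟨S, hS, -⟩ := hx
    exact ⟨S, hS⟩
  choose U hU using fun n => ((h𝒰 n).1).exists_eq_range (hne n)
  have hUmem : ∀ n k, U n k ∈ 𝒰 n := fun n k => (hU n) ▸ mem_range_self k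
  have hex : ∀ x n, {k | x ∈ U n k}.Nonempty := by
    intro x n
    have hx : x ∈ ⋃₀ 𝒰 n := (hcov n).symm ▸ mem_univ x
    obtain ⟨S, hS, hxS⟩ := hx
    rw [hU n] at hS
    obtain ⟨k, rfl⟩ := hS
    exact ⟨k, hxS⟩
  set Ψ : α → ℕ → ℕ := fun x n => sInf {k | x ∈ U n k} with hΨdef
  have hΨx : ∀ x n, x ∈ U n (Ψ x n) := fun x n => Nat.sInf_mem (hex x n)
  have hΨmeas : Measurable Ψ := by
    rw [measurable_pi_iff]
    intro n
    apply measurable_to_nat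
    intro x
    have heq : (fun y => Ψ y n) ⁻¹' {Ψ x n}
        = U n (Ψ x n) ∩ ⋂ j ∈ {j | j < Ψ x n}, (U n j)ᶜ := by
      ext y
      simp only [mem_preimage, mem_singleton_iff, mem_inter_iff, mem_iInter,
        mem_compl_iff, mem_setOf_eq]
      constructor
      · intro h
        refine ⟨h ▸ hΨx y n, fun j hj hyj => ?_⟩
        have hle : Ψ y n ≤ j := Nat.sInf_le hyj
        omega
      · rintro ⟨h1, h2⟩
        have hle : Ψ y n ≤ Ψ x n := Nat.sInf_le h1
        rcases lt_or_eq_of_le hle with h | h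
        · exact absurd (hΨx y n) (h2 _ h)
        · exact h
    rw [heq]
    exact (hmeas n _ (hUmem n _)).inter
      (MeasurableSet.biInter (to_countable _) fun j _ => (hmeas n _ (hUmem n _)).compl)
  obtain ⟨g, hg1, hg2⟩ := hemp Ψ hΨmeas
  set F : ℕ → Set (Set α) := fun n => (U n) '' (Iio (g n)) with hFdef
  have hFfin : ∀ n, (F n).Finite := fun n => (finite_Iio _).image _
  have hFsub : ∀ n, F n ⊆ 𝒰 n := by
    rintro n S ⟨k, -, rfl⟩
    exact hUmem n k
  have hxV : ∀ x n, x ∈ ⋃₀ F n ↔ Ψ x n < g n := by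
    intro x n
    constructor
    · rintro ⟨S, ⟨k, hk, rfl⟩, hxS⟩
      exact lt_of_le_of_lt (Nat.sInf_le hxS) hk
    · intro h
      exact ⟨U n (Ψ x n), ⟨Ψ x n, h, rfl⟩, hΨx x n⟩
  have hVne : ∀ n, ⋃₀ F n ≠ univ := fun n h =>
    hnofin n ⟨F n, hFsub n, hFfin n, h⟩
  have hlarge : ∀ x : α, {S | S ∈ Set.range (fun n => ⋃₀ F n) ∧ x ∈ S}.Infinite := by
    intro x
    by_contra hfin
    rw [not_infinite] at hfin
    have hNx : {n | Ψ x n < g n}.Infinite := hg1 _ ⟨x, rfl⟩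
    obtain ⟨Wx, hWx, hWxfib⟩ := pigeonhole' hNx hfin
      (fun n hn => ⟨⟨n, rfl⟩, (hxV x n).mpr hn⟩)
    set ℱ : Set (Set α) :=
      {S | (S ∈ Set.range (fun n => ⋃₀ F n) ∧ x ∈ S) ∧ {n | ⋃₀ F n = S}.Infinite}
      with hℱdef
    have hℱfin : ℱ.Finite := hfin.subset (fun S hS => hS.1)
    have hℱne : ℱ.Nonempty := ⟨Wx, hWx, hWxfib.mono (fun n hn => hn.2)⟩
    have hchain : ∀ A ∈ ℱ, ∀ B ∈ ℱ, A ⊆ B ∨ B ⊆ A := by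
      intro A hA B hB
      by_contra hcon
      push_neg at hcon
      obtain ⟨a, haA, haB⟩ := not_subset.mp hcon.1
      obtain ⟨b, hbB, hbA⟩ := not_subset.mp hcon.2
      have h1 : {n | ⋃₀ F n = A} ⊆ {n | Ψ a n < g n ∧ g n ≤ Ψ b n} := by
        intro n hn
        simp only [mem_setOf_eq] at hn ⊢
        constructor
        · exact (hxV a n).mp (hn ▸ haA)
        · exact not_lt.mp (fun h => hbA (hn ▸ ((hxV b n).mpr h)))
      have h2 : {n | ⋃₀ F n = B} ⊆ {n | Ψ b n < g n ∧ g n ≤ Ψ a n} := by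
        intro n hn
        simp only [mem_setOf_eq] at hn ⊢
        constructor
        · exact (hxV b n).mp (hn ▸ hbB)
        · exact not_lt.mp (fun h => haB (hn ▸ ((hxV a n).mpr h)))
      rcases hg2 (Ψ a) ⟨a, rfl⟩ (Ψ b) ⟨b, rfl⟩ with h | h
      · exact (hA.2.mono h1) h
      · exact (hB.2.mono h2) h
    obtain ⟨M, hM, hMmax⟩ := chain_max' ℱ hℱfin hℱne hchain
    have hMne : M ≠ univ := by
      obtain ⟨n₀, hn₀⟩ := hM.1.1
      exact hn₀ ▸ hVne n₀
    obtain ⟨z, hz⟩ := (ne_univ_iff_exists_notMem M).mp hMne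
    have hxM : x ∈ M := hM.1.2
    have hsubM : {n | ⋃₀ F n = M} ⊆ {n | Ψ x n < g n ∧ g n ≤ Ψ z n} := by
      intro n hn
      simp only [mem_setOf_eq] at hn ⊢
      constructor
      · exact (hxV x n).mp (hn ▸ hxM)
      · exact not_lt.mp (fun h => hz (hn ▸ ((hxV z n).mpr h)))
    have hQfin : {n | Ψ z n < g n ∧ g n ≤ Ψ x n}.Finite := by
      rcases hg2 (Ψ x) ⟨x, rfl⟩ (Ψ z) ⟨z, rfl⟩ with h | h
      · exact absurd h (hM.2.mono hsubM)
      · exact h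
    have hdiff : ({n | Ψ z n < g n} \ {n | Ψ z n < g n ∧ g n ≤ Ψ x n}).Infinite :=
      (hg1 _ ⟨z, rfl⟩).diff hQfin
    obtain ⟨W', hW', hW'fib⟩ := pigeonhole' hdiff hfin (fun n hn => by
      have hzx : Ψ x n < g n := by
        by_contra hx'
        exact hn.2 ⟨hn.1, not_lt.mp hx'⟩
      exact ⟨⟨n, rfl⟩, (hxV x n).mpr hzx⟩)
    have hW'ℱ : W' ∈ ℱ := ⟨hW', hW'fib.mono (fun n hn => hn.2)⟩
    obtain ⟨n₁, hn₁, hVn₁⟩ := hW'fib.nonempty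
    have hzW' : z ∈ W' := hVn₁ ▸ (hxV z n₁).mpr hn₁.1
    exact hz (hMmax W' hW'ℱ hzW')
  refine ⟨F, fun n => ⟨hFfin n, hFsub n⟩, countable_range _, ?_, ?_, ?_⟩
  · rintro S ⟨n, rfl⟩
    exact Set.Finite.measurableSet_sUnion (hFfin n)
      (fun t ht => hmeas n t (hFsub n ht))
  · constructor
    · constructor
      · apply eq_univ_iff_forall.mpr
        intro x
        obtain ⟨S, ⟨hSr, hxS⟩⟩ := (hlarge x).nonempty
        exact ⟨S, hSr, hxS⟩
      · rintro ⟨n, hn⟩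
        exact hVne n hn
    · exact hlarge
  · intro x y
    rcases hg2 (Ψ x) ⟨x, rfl⟩ (Ψ y) ⟨y, rfl⟩ with h | h
    · left
      refine (h.image (fun n => ⋃₀ F n)).subset ?_
      rintro S ⟨⟨n, rfl⟩, hxS, hyS⟩
      exact ⟨n, ⟨(hxV x n).mp hxS, not_lt.mp (fun hh => hyS ((hxV y n).mpr hh))⟩, rfl⟩
    · right
      refine (h.image (fun n => ⋃₀ F n)).subset ?_
      rintro S ⟨⟨n, rfl⟩, hyS, hxS⟩
      exact ⟨n, ⟨(hxV y n).mp hyS, not_lt.mp (fun hh => hxS ((hxV x n).mpr hh))⟩, rfl⟩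


lemma emp_of_ufin {α : Type} [MeasurableSpace α]
    (hufin : Ufin (BorelGamma α) (BorelTau α))
    (f : α → ℕ → ℕ) (hf : Measurable f) :
    ExcludedMiddleProp (Set.range f) := by
  classical
  by_cases hI : {n | ∃ m, ∀ x : α, f x n ≤ m}.Infinite
  · refine ⟨fun n => if h : ∃ m, ∀ x : α, f x n ≤ m then h.choose + 1 else 0, ?_, ?_⟩
    · rintro _ ⟨x, rfl⟩
      refine hI.mono (fun n hn => ?_)
      simp only [mem_setOf_eq] at hn ⊢
      rw [dif_pos hn]
      exact Nat.lt_succ_of_le (hn.choose_spec x)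
    · rintro _ ⟨x, rfl⟩ _ ⟨y, rfl⟩
      left
      convert finite_empty
      ext n
      simp only [mem_setOf_eq, mem_empty_iff_false, iff_false, not_and]
      intro h1
      by_cases hn : ∃ m, ∀ x : α, f x n ≤ m
      · rw [dif_pos hn]
        exact not_le.mpr (Nat.lt_succ_of_le (hn.choose_spec y))
      · rw [dif_neg hn] at h1
        exact absurd h1 (Nat.not_lt_zero _)
  · rw [not_infinite] at hI
    have hJ : {n | ∃ m, ∀ x : α, f x n ≤ m}ᶜ.Infinite := hI.infinite_compl
    set σ : ℕ → ℕ := fun k => ((Set.Infinite.natEmbedding _ hJ) k : ℕ) with hσdef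
    have hσJ : ∀ k, ¬ ∃ m, ∀ x : α, f x (σ k) ≤ m := fun k =>
      ((Set.Infinite.natEmbedding _ hJ) k).2
    have hσinj : Function.Injective σ := fun a b h =>
      (Set.Infinite.natEmbedding _ hJ).injective (Subtype.ext h)
    have hub : ∀ k m, ∃ x, m < f x (σ k) := by
      intro k m
      have := hσJ k
      push_neg at this
      obtain ⟨x, hx⟩ := this m
      exact ⟨x, hx⟩
    set E : ℕ → ℕ → Set α := fun n m => {x | f x n ≤ m} with hEdef
    have hEmono : ∀ n, Monotone (E n) := fun n a b hab x hx => le_trans hx hab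
    have hmemE : ∀ n m x, x ∈ E n m ↔ f x n ≤ m := fun n m x => by simp [hEdef]
    have hEmeas : ∀ n m, MeasurableSet (E n m) := by
      intro n m
      have hco : Measurable fun x => f x n := (measurable_pi_apply n).comp hf
      exact hco ((finite_Iic m).measurableSet)
    have hcovE : ∀ n, ⋃₀ Set.range (E n) = univ := by
      intro n
      apply eq_univ_iff_forall.mpr
      intro x
      exact ⟨E n (f x n), mem_range_self _, (hmemE n _ x).mpr (le_refl _)⟩
    have h𝒞 : ∀ k, Set.range (E (σ k)) ∈ BorelGamma α := by
      intro k
      refine ⟨countable_range _, ?_, ⟨?_, ?_⟩, ?_, ?_⟩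
      · rintro S ⟨m, rfl⟩
        exact hEmeas _ m
      · exact hcovE (σ k)
      · rintro ⟨m, hm⟩
        obtain ⟨x, hx⟩ := hub k m
        exact absurd ((hmemE _ m x).mp (hm ▸ mem_univ x)) (not_le.mpr hx)
      · intro hfin
        obtain ⟨m, -, hm⟩ := chain_sUnion' (E (σ k)) (hEmono _) hfin subset_rfl
          ⟨E (σ k) 0, mem_range_self 0⟩
        rw [hcovE (σ k)] at hm
        obtain ⟨x, hx⟩ := hub k m
        exact absurd ((hmemE _ m x).mp (hm ▸ mem_univ x)) (not_le.mpr hx)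
      · intro x
        refine ((finite_Iio (f x (σ k))).image (E (σ k))).subset ?_
        rintro S ⟨⟨m, rfl⟩, hxS⟩
        exact ⟨m, not_le.mp (fun hh => hxS ((hmemE _ m _).mpr hh)), rfl⟩
    have hnofin' : ∀ k, ¬ ∃ G : Set (Set α),
        G ⊆ Set.range (E (σ k)) ∧ G.Finite ∧ ⋃₀ G = univ := by
      rintro k ⟨G, hGsub, hGfin, hGuniv⟩
      rcases G.eq_empty_or_nonempty with rfl | hGne
      · rw [sUnion_empty] at hGuniv
        obtain ⟨x, -⟩ := hub k 0
        exact (hGuniv ▸ mem_univ x : x ∈ (∅ : Set α))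
      · obtain ⟨m, -, hm⟩ := chain_sUnion' (E (σ k)) (hEmono _) hGfin hGsub hGne
        rw [hGuniv] at hm
        obtain ⟨x, hx⟩ := hub k m
        exact absurd ((hmemE _ m x).mp (hm ▸ mem_univ x)) (not_le.mpr hx)
    obtain ⟨F, hF, h𝒱⟩ := hufin (fun k => Set.range (E (σ k))) h𝒞 hnofin'
    obtain ⟨-, -, ⟨⟨-, hlarge⟩, hpairs⟩⟩ := h𝒱
    set g : ℕ → ℕ := fun n =>
      if h : ∃ k, σ k = n ∧ (∀ j, j < k → ⋃₀ F j ≠ ⋃₀ F k) ∧ ∃ m, ⋃₀ F k = E n m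
      then sInf {m | ⋃₀ F h.choose ⊆ E n m} + 1 else 0 with hgdef
    have hgpos : ∀ n (h : ∃ k, σ k = n ∧ (∀ j, j < k → ⋃₀ F j ≠ ⋃₀ F k) ∧ ∃ m, ⋃₀ F k = E n m),
        g n = sInf {m | ⋃₀ F h.choose ⊆ E n m} + 1 := fun n h => dif_pos h
    have hmem : ∀ n (h : ∃ k, σ k = n ∧ (∀ j, j < k → ⋃₀ F j ≠ ⋃₀ F k) ∧ ∃ m, ⋃₀ F k = E n m) (x : α),
        x ∈ ⋃₀ F h.choose ↔ f x n < g n := by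
      intro n h x
      obtain ⟨hσk, hrep, m₀, hm₀⟩ := h.choose_spec
      have hsupne : {m | ⋃₀ F h.choose ⊆ E n m}.Nonempty := ⟨m₀, hm₀.subset⟩
      have h1 : ⋃₀ F h.choose ⊆ E n (sInf {m | ⋃₀ F h.choose ⊆ E n m}) :=
        Nat.sInf_mem hsupne
      have h2 : sInf {m | ⋃₀ F h.choose ⊆ E n m} ≤ m₀ := Nat.sInf_le hm₀.subset
      have h3 : E n (sInf {m | ⋃₀ F h.choose ⊆ E n m}) ⊆ ⋃₀ F h.choose :=
        (hEmono n h2).trans hm₀.symm.subset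
      rw [hgpos n h]
      constructor
      · intro hx
        exact Nat.lt_succ_of_le ((hmemE n _ x).mp (h1 hx))
      · intro hx
        exact h3 ((hmemE n _ x).mpr (Nat.lt_succ_iff.mp hx))
    have hPof : ∀ n, g n ≠ 0 → ∃ k, σ k = n ∧ (∀ j, j < k → ⋃₀ F j ≠ ⋃₀ F k) ∧ ∃ m, ⋃₀ F k = E n m := by
      intro n hn
      by_contra hP
      exact hn (dif_neg hP)
    refine ⟨g, ?_, ?_⟩
    · rintro _ ⟨x, rfl⟩
      have hSx := hlarge x
      have hkey : ∀ S, S ∈ Set.range (fun k => ⋃₀ F k) → x ∈ S →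
          f x (σ (sInf {k | ⋃₀ F k = S})) < g (σ (sInf {k | ⋃₀ F k = S}))
          ∧ ⋃₀ F (sInf {k | ⋃₀ F k = S}) = S := by
        intro S hSr hxS
        obtain ⟨k₀, hk₀⟩ := hSr
        have hne' : {k | ⋃₀ F k = S}.Nonempty := ⟨k₀, hk₀⟩
        have hkSm : ⋃₀ F (sInf {k | ⋃₀ F k = S}) = S := Nat.sInf_mem hne'
        have hP : ∃ k, σ k = σ (sInf {k' | ⋃₀ F k' = S}) ∧
            (∀ j, j < k → ⋃₀ F j ≠ ⋃₀ F k) ∧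
            ∃ m, ⋃₀ F k = E (σ (sInf {k' | ⋃₀ F k' = S})) m := by
          refine ⟨sInf {k | ⋃₀ F k = S}, rfl, ?_, ?_⟩
          · intro j hj heq
            exact absurd (Nat.sInf_le (show ⋃₀ F j = S from heq.trans hkSm))
              (not_le.mpr hj)
          · have hFne : (F (sInf {k | ⋃₀ F k = S})).Nonempty := by
              obtain ⟨T, hT, -⟩ : x ∈ ⋃₀ F (sInf {k | ⋃₀ F k = S}) := hkSm.symm ▸ hxS
              exact ⟨T, hT⟩
            obtain ⟨m, -, hm⟩ := chain_sUnion' (E (σ (sInf {k | ⋃₀ F k = S})))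
              (hEmono _) (hF _).1 (hF _).2 hFne
            exact ⟨m, hm⟩
        have hch : hP.choose = sInf {k | ⋃₀ F k = S} := hσinj hP.choose_spec.1
        refine ⟨?_, hkSm⟩
        refine (hmem _ hP x).mp ?_
        rw [hch, hkSm]
        exact hxS
      have hinj : InjOn (fun S => σ (sInf {k | ⋃₀ F k = S}))
          {S | S ∈ Set.range (fun k => ⋃₀ F k) ∧ x ∈ S} := by
        intro S hS T hT hST
        have h1 := (hkey S hS.1 hS.2).2
        have h2 := (hkey T hT.1 hT.2).2
        have h3 := hσinj hST
        rw [← h1, ← h2, h3]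
      refine Set.Infinite.mono ?_ (hSx.image hinj)
      rintro _ ⟨S, hS, rfl⟩
      exact (hkey S hS.1 hS.2).1
    · have main : ∀ x y : α,
          {S | S ∈ Set.range (fun k => ⋃₀ F k) ∧ x ∈ S ∧ y ∉ S}.Finite →
          {n | f x n < g n ∧ g n ≤ f y n}.Finite := by
        intro x y hfin
        rw [← not_infinite]
        intro hinf
        have hψ : ∀ n, f x n < g n → g n ≤ f y n →
            ∃ (h : ∃ k, σ k = n ∧ (∀ j, j < k → ⋃₀ F j ≠ ⋃₀ F k) ∧ ∃ m, ⋃₀ F k = E n m), x ∈ ⋃₀ F h.choose ∧ y ∉ ⋃₀ F h.choose := by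
          intro n h1 h2
          have hP := hPof n (by intro h0; rw [h0] at h1; exact Nat.not_lt_zero _ h1)
          refine ⟨hP, (hmem n hP x).mpr h1, fun hy => ?_⟩
          exact absurd h2 (not_le.mpr ((hmem n hP y).mp hy))
        set ψ : ℕ → Set α := fun n =>
          if h : ∃ k, σ k = n ∧ (∀ j, j < k → ⋃₀ F j ≠ ⋃₀ F k) ∧ ∃ m, ⋃₀ F k = E n m
          then ⋃₀ F h.choose else ∅ with hψdef
        have hψval : ∀ n (h : ∃ k, σ k = n ∧ (∀ j, j < k → ⋃₀ F j ≠ ⋃₀ F k) ∧ ∃ m, ⋃₀ F k = E n m), ψ n = ⋃₀ F h.choose := fun n h => dif_pos h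
        have himg : ψ '' {n | f x n < g n ∧ g n ≤ f y n}
            ⊆ {S | S ∈ Set.range (fun k => ⋃₀ F k) ∧ x ∈ S ∧ y ∉ S} := by
          rintro _ ⟨n, hn, rfl⟩
          obtain ⟨hP, hx', hy'⟩ := hψ n hn.1 hn.2
          rw [hψval n hP]
          exact ⟨⟨hP.choose, rfl⟩, hx', hy'⟩
        have hinjOn : InjOn ψ {n | f x n < g n ∧ g n ≤ f y n} := by
          intro n₁ hn₁ n₂ hn₂ heq
          obtain ⟨hP₁, -, -⟩ := hψ n₁ hn₁.1 hn₁.2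
          obtain ⟨hP₂, -, -⟩ := hψ n₂ hn₂.1 hn₂.2
          rw [hψval n₁ hP₁, hψval n₂ hP₂] at heq
          have hσ₁ := hP₁.choose_spec.1
          have hσ₂ := hP₂.choose_spec.1
          rcases lt_trichotomy hP₁.choose hP₂.choose with h | h | h
          · exact absurd heq (hP₂.choose_spec.2.1 _ h)
          · rw [← hσ₁, ← hσ₂, h]
          · exact absurd heq.symm (hP₁.choose_spec.2.1 _ h)
        exact (hinf.image hinjOn) (hfin.subset himg)
      rintro _ ⟨x, rfl⟩ _ ⟨y, rfl⟩
      rcases hpairs x y with h | h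
      · left; exact main x y h
      · right; exact main y x h


/-- `X` satisfies Ufin(B_Γ,B_T) iff every Borel image of `X` in `ℕ^ℕ`
satisfies the excluded middle property. -/
theorem statement11 (X : Set ℝ) (hX : X.Infinite) :
    Ufin (BorelGamma ↥X) (BorelTau ↥X) ↔
      ∀ f : ↥X → (ℕ → ℕ), Measurable f → ExcludedMiddleProp (Set.range f) := by
  have : Nonempty ↥X := hX.nonempty.to_subtype
  exact ⟨fun h f hf => emp_of_ufin h f hf, fun h => ufin_of_emp h⟩

end TauCoverPaper
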